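/- arXiv:math/0506171 — 4 statements merged into one kernel-verified Lean document; each statement's English description precedes it below -/
import Mathlib

section
/- Let A be an algebraic torus with Lie algebra a acting linearly on V = ⊕_{i=1}^n (ℂ_{χ_i} ⊕ ℂ_{-χ_i}) with characters χ_1,…,χ_n ∈ a*, where ω pairs ℂ_{χ_i} with ℂ_{-χ_i}. The moment map is m(x_1,…,x_n,y_1,…,y_n) = Σ_i x_i y_i χ_i. Suppose no character χ_i is 'critical', i.e., each χ_i lies in the span of {χ_j : j ≠ i}. Then the zero fiber m^{-1}(0) is an irreducible algebraic variety. -/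
open scoped BigOperators

open MvPolynomial in
private lemma aux_single_kernel {n : ℕ} {E : Type*} [AddCommGroup E] [Module ℂ E]
    (χ : Fin n → E) (i : Fin n)
    (h : χ i ∈ Submodule.span ℂ (χ '' {j | j ≠ i})) :
    ∃ k : Fin n → ℂ, (∑ j, k j • χ j = 0) ∧ k i = 1 := by
  classical
  obtain ⟨l, hl, hlc⟩ := (Finsupp.mem_span_image_iff_linearCombination ℂ).mp h
  have hli : l i = 0 := by
    by_contra hne
    have : i ∈ {j | j ≠ i} := hl (Finsupp.mem_support_iff.mpr hne)
    simp at this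
  refine ⟨fun j => (if j = i then (1:ℂ) else 0) - l j, ?_, by simp [hli]⟩
  have hsum : ∑ j, l j • χ j = χ i := by
    rw [← hlc, Finsupp.linearCombination_apply, Finsupp.sum_fintype]
    intro j; simp
  have hsingle : ∑ j, (if j = i then (1:ℂ) else 0) • χ j = χ i := by
    rw [Finset.sum_eq_single i]
    · simp
    · intro j _ hj; simp [hj]
    · simp
  simp only [sub_smul, Finset.sum_sub_distrib, hsum, hsingle, sub_self]

private lemma aux_kernel_vec {n : ℕ} {E : Type*} [AddCommGroup E] [Module ℂ E]
    (χ : Fin n → E)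
    (hnoncrit : ∀ i : Fin n, χ i ∈ Submodule.span ℂ (χ '' {j | j ≠ i})) :
    ∃ κ : Fin n → ℂ, (∑ i, κ i • χ i = 0) ∧ ∀ i, κ i ≠ 0 := by
  classical
  suffices h : ∀ S : Finset (Fin n), ∃ κ : Fin n → ℂ,
      (∑ i, κ i • χ i = 0) ∧ ∀ i ∈ S, κ i ≠ 0 by
    obtain ⟨κ, h1, h2⟩ := h Finset.univ
    exact ⟨κ, h1, fun i => h2 i (Finset.mem_univ i)⟩
  intro S
  induction S using Finset.induction with
  | empty => exact ⟨0, by simp, by simp⟩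
  | @insert i S hiS ih =>
    obtain ⟨κ, hκK, hκS⟩ := ih
    obtain ⟨k, hkK, hki⟩ := aux_single_kernel χ i (hnoncrit i)
    obtain ⟨t, ht⟩ := Infinite.exists_notMem_finset
      ((insert i S).image (fun j => -(κ j) / k j))
    refine ⟨κ + t • k, ?_, ?_⟩
    · simp only [Pi.add_apply, Pi.smul_apply, smul_eq_mul, add_smul, mul_smul,
        Finset.sum_add_distrib, hκK, ← Finset.smul_sum, hkK, smul_zero, add_zero]
    · intro j hj
      have hval : κ j + t * k j ≠ 0 := by
        rcases eq_or_ne (k j) 0 with hk0 | hk0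
        · rw [hk0, mul_zero, add_zero]
          rcases Finset.mem_insert.mp hj with rfl | hjS
          · exact absurd hki (by simp [hk0])
          · exact hκS j hjS
        · intro habs
          apply ht
          refine Finset.mem_image.mpr ⟨j, hj, ?_⟩
          field_simp
          linear_combination -habs
      simpa using hval

open MvPolynomial in
private lemma aux_main {n m : ℕ} {E : Type*} [AddCommGroup E] [Module ℂ E]
    (χ : Fin n → E) (κ : Fin n → ℂ) (hκK : ∑ i, κ i • χ i = 0) (hκne : ∀ i, κ i ≠ 0)
    (β : Fin m → Fin n → ℂ) (hβ : ∀ j, ∑ i, β j i • χ i = 0)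
    (hsurj : ∀ c : Fin n → ℂ, ∑ i, c i • χ i = 0 →
      ∃ s : Fin m → ℂ, ∀ i, c i = ∑ j, s j * β j i) :
    (MvPolynomial.vanishingIdeal ℂ {p : (Fin n ⊕ Fin n) → ℂ |
      ∑ i, (p (Sum.inl i) * p (Sum.inr i)) • χ i = 0}).IsPrime := by
  classical
  set Zset : Set ((Fin n ⊕ Fin n) → ℂ) :=
    {p | ∑ i, (p (Sum.inl i) * p (Sum.inr i)) • χ i = 0} with hZset
  let v : (Fin n ⊕ Fin n) → MvPolynomial (Fin n ⊕ Fin m) ℂ :=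
    Sum.elim (fun i => X (Sum.inl i))
      (fun i => (∑ j, C (β j i) * X (Sum.inr j)) *
        ∏ j ∈ Finset.univ.erase i, X (Sum.inl j))
  -- evaluation of v at a point
  have hv_inl : ∀ (w : (Fin n ⊕ Fin m) → ℂ) (i : Fin n),
      eval w (v (Sum.inl i)) = w (Sum.inl i) := by
    intro w i; simp [v]
  have hv_inr : ∀ (w : (Fin n ⊕ Fin m) → ℂ) (i : Fin n),
      eval w (v (Sum.inr i)) =
        (∑ j, β j i * w (Sum.inr j)) * ∏ j ∈ Finset.univ.erase i, w (Sum.inl j) := by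
    intro w i; simp [v]
  -- the image of the parametrization is contained in Zset
  have himg : ∀ w : (Fin n ⊕ Fin m) → ℂ, (fun u => eval w (v u)) ∈ Zset := by
    intro w
    show ∑ i, (eval w (v (Sum.inl i)) * eval w (v (Sum.inr i))) • χ i = 0
    have step1 : ∀ i : Fin n,
        (eval w (v (Sum.inl i)) * eval w (v (Sum.inr i))) • χ i =
        (∏ j, w (Sum.inl j)) • ((∑ j, β j i * w (Sum.inr j)) • χ i) := by
      intro i
      rw [hv_inl, hv_inr, smul_smul]
      congr 1
      rw [← Finset.mul_prod_erase Finset.univ (fun j => w (Sum.inl j)) (Finset.mem_univ i)]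
      ring
    rw [Finset.sum_congr rfl fun i _ => step1 i, ← Finset.smul_sum]
    have : ∑ i, (∑ j, β j i * w (Sum.inr j)) • χ i = 0 := by
      have swap : ∑ i, (∑ j, β j i * w (Sum.inr j)) • χ i =
          ∑ j, w (Sum.inr j) • ∑ i, β j i • χ i := by
        calc ∑ i, (∑ j, β j i * w (Sum.inr j)) • χ i
            = ∑ i, ∑ j, (β j i * w (Sum.inr j)) • χ i :=
              Finset.sum_congr rfl fun i _ => Finset.sum_smul
          _ = ∑ j, ∑ i, (β j i * w (Sum.inr j)) • χ i := Finset.sum_comm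
          _ = ∑ j, w (Sum.inr j) • ∑ i, β j i • χ i := by
              refine Finset.sum_congr rfl fun j _ => ?_
              rw [Finset.smul_sum]
              refine Finset.sum_congr rfl fun i _ => ?_
              rw [smul_smul, mul_comm]
      rw [swap]
      simp [hβ]
    rw [this, smul_zero]
  -- evaluating the pullback
  have heval : ∀ (h : MvPolynomial (Fin n ⊕ Fin n) ℂ) (w : (Fin n ⊕ Fin m) → ℂ),
      eval w ((aeval v) h) = eval (fun u => eval w (v u)) h := by
    intro h w
    have h1 := MvPolynomial.comp_aeval_apply (R := ℂ) v (MvPolynomial.aeval w) h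
    have h2 : ∀ (q : MvPolynomial (Fin n ⊕ Fin m) ℂ), (MvPolynomial.aeval w) q = eval w q :=
      fun q => RingHom.congr_fun (MvPolynomial.coe_aeval_eq_eval w) q
    have h3 : ∀ (q : MvPolynomial (Fin n ⊕ Fin n) ℂ)
        (x : (Fin n ⊕ Fin n) → ℂ), (MvPolynomial.aeval x) q = eval x q :=
      fun q x => RingHom.congr_fun (MvPolynomial.coe_aeval_eq_eval x) q
    simp only [h2] at h1
    rw [h1, h3]
  -- density: anything in the kernel of the pullback vanishes on Zset
  have hvanish : ∀ f : MvPolynomial (Fin n ⊕ Fin n) ℂ,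
      (aeval v) f = 0 → f ∈ MvPolynomial.vanishingIdeal ℂ Zset := by
    intro f hf
    rw [MvPolynomial.mem_vanishingIdeal_iff]
    intro p hp
    have hpZ : ∑ i, (p (Sum.inl i) * p (Sum.inr i)) • χ i = 0 := hp
    -- the curve
    let pγ : (Fin n ⊕ Fin n) → Polynomial ℂ :=
      Sum.elim
        (fun i => if p (Sum.inl i) ≠ 0 then Polynomial.C (p (Sum.inl i))
          else if p (Sum.inr i) ≠ 0 then Polynomial.C (κ i / p (Sum.inr i)) * Polynomial.X ^ 2
          else Polynomial.X)
        (fun i => if p (Sum.inl i) ≠ 0 then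
            Polynomial.C (p (Sum.inr i)) + Polynomial.C (κ i / p (Sum.inl i)) * Polynomial.X ^ 2
          else if p (Sum.inr i) ≠ 0 then Polynomial.C (p (Sum.inr i))
          else Polynomial.C (κ i) * Polynomial.X)
    have hγ0 : ∀ u, (pγ u).eval 0 = p u := by
      rintro (i | i)
      · simp only [pγ, Sum.elim_inl]
        split_ifs with h1 h2
        · simp
        · simpa using (not_not.mp h1).symm
        · simpa using (not_not.mp h1).symm
      · simp only [pγ, Sum.elim_inr]
        split_ifs with h1 h2
        · simp
        · simp
        · simpa using (not_not.mp h2).symm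
    -- for τ ≠ 0, the curve point lies in the image of the parametrization
    have hcurve : ∀ τ : ℂ, τ ≠ 0 → eval (fun u => (pγ u).eval τ) f = 0 := by
      intro τ hτ
      set q : (Fin n ⊕ Fin n) → ℂ := fun u => (pγ u).eval τ with hq
      have hq1 : ∀ i, q (Sum.inl i) ≠ 0 := by
        intro i
        show Polynomial.eval τ (pγ (Sum.inl i)) ≠ 0
        simp only [pγ, Sum.elim_inl]
        split_ifs with h1 h2
        · simpa using h1
        · simp only [Polynomial.eval_mul, Polynomial.eval_C, Polynomial.eval_pow,
            Polynomial.eval_X]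
          exact mul_ne_zero (div_ne_zero (hκne i) h2) (pow_ne_zero 2 hτ)
        · simpa using hτ
      have hq2 : ∀ i, q (Sum.inl i) * q (Sum.inr i) =
          p (Sum.inl i) * p (Sum.inr i) + τ ^ 2 * κ i := by
        intro i
        show Polynomial.eval τ (pγ (Sum.inl i)) * Polynomial.eval τ (pγ (Sum.inr i)) =
          p (Sum.inl i) * p (Sum.inr i) + τ ^ 2 * κ i
        simp only [pγ, Sum.elim_inl, Sum.elim_inr]
        split_ifs with h1 h2
        · simp only [Polynomial.eval_C, Polynomial.eval_add, Polynomial.eval_mul,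
            Polynomial.eval_pow, Polynomial.eval_X]
          field_simp
        · rw [not_not.mp h1]
          simp only [Polynomial.eval_C, Polynomial.eval_mul,
            Polynomial.eval_pow, Polynomial.eval_X]
          field_simp
          ring
        · rw [not_not.mp h1, not_not.mp h2]
          simp only [Polynomial.eval_C, Polynomial.eval_mul, Polynomial.eval_X]
          ring
      -- the product vector lies in the kernel
      have hcK : ∑ i, (q (Sum.inl i) * q (Sum.inr i)) • χ i = 0 := by
        have : ∀ i : Fin n, (q (Sum.inl i) * q (Sum.inr i)) • χ i =
            (p (Sum.inl i) * p (Sum.inr i)) • χ i + τ ^ 2 • (κ i • χ i) := by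
          intro i; rw [hq2 i, add_smul, smul_smul]
        rw [Finset.sum_congr rfl fun i _ => this i, Finset.sum_add_distrib, hpZ,
          ← Finset.smul_sum, hκK, smul_zero, add_zero]
      -- find parameters
      set T : ℂ := ∏ i, q (Sum.inl i) with hT
      have hTne : T ≠ 0 := Finset.prod_ne_zero_iff.mpr fun i _ => hq1 i
      have hcK' : ∑ i, (T⁻¹ * (q (Sum.inl i) * q (Sum.inr i))) • χ i = 0 := by
        have : ∀ i : Fin n, (T⁻¹ * (q (Sum.inl i) * q (Sum.inr i))) • χ i =
            T⁻¹ • ((q (Sum.inl i) * q (Sum.inr i)) • χ i) := fun i => by rw [smul_smul]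
        rw [Finset.sum_congr rfl fun i _ => this i, ← Finset.smul_sum, hcK, smul_zero]
      obtain ⟨s, hs⟩ := hsurj _ hcK'
      set w : (Fin n ⊕ Fin m) → ℂ := Sum.elim (fun i => q (Sum.inl i)) s with hw
      have hwq : (fun u => eval w (v u)) = q := by
        funext u
        rcases u with i | i
        · rw [hv_inl]; rfl
        · rw [hv_inr]
          have e1 : ∑ j, β j i * w (Sum.inr j) =
              T⁻¹ * (q (Sum.inl i) * q (Sum.inr i)) := by
            rw [hs i]
            exact Finset.sum_congr rfl fun j _ => mul_comm _ _
          have hwi : ∀ j, w (Sum.inl j) = q (Sum.inl j) := fun j => rfl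
          have e2 : ∏ j ∈ Finset.univ.erase i, w (Sum.inl j) = (q (Sum.inl i))⁻¹ * T := by
            have h5 := Finset.mul_prod_erase Finset.univ (fun j => q (Sum.inl j))
              (Finset.mem_univ i)
            simp only [hwi]
            rw [eq_inv_mul_iff_mul_eq₀ (hq1 i), hT]
            exact h5
          rw [e1, e2]
          rw [show T⁻¹ * (q (Sum.inl i) * q (Sum.inr i)) * ((q (Sum.inl i))⁻¹ * T)
              = (T⁻¹ * T) * ((q (Sum.inl i))⁻¹ * (q (Sum.inl i) * q (Sum.inr i))) from by ring,
            inv_mul_cancel₀ hTne, inv_mul_cancel_left₀ (hq1 i), one_mul]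
      rw [← hwq, ← heval, hf]
      simp
    -- the polynomial along the curve vanishes identically
    have hcurve_eval : ∀ τ : ℂ,
        Polynomial.eval τ ((MvPolynomial.aeval pγ) f) =
          eval (fun u => (pγ u).eval τ) f := by
      intro τ
      have h1 := MvPolynomial.comp_aeval_apply (R := ℂ) pγ (Polynomial.aeval τ) f
      rw [show ((Polynomial.aeval τ) ((MvPolynomial.aeval pγ) f)) =
          Polynomial.eval τ ((MvPolynomial.aeval pγ) f) from
        congrFun (Polynomial.coe_aeval_eq_eval τ) _] at h1
      rw [h1]
      have h2 : ∀ u, (Polynomial.aeval τ) (pγ u) = (pγ u).eval τ :=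
        fun u => congrFun (Polynomial.coe_aeval_eq_eval τ) _
      rw [show (fun u => (Polynomial.aeval τ) (pγ u)) = (fun u => (pγ u).eval τ) from
        funext h2]
      exact RingHom.congr_fun (MvPolynomial.coe_aeval_eq_eval _) f
    have hpoly : (MvPolynomial.aeval pγ) f = 0 := by
      apply Polynomial.eq_zero_of_infinite_isRoot
      have hinf : ({τ : ℂ | τ ≠ 0}).Infinite := by
        have : ({τ : ℂ | τ ≠ 0}) = ({0} : Set ℂ)ᶜ := by ext; simp
        rw [this]
        exact Set.Finite.infinite_compl (Set.finite_singleton 0)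
      apply hinf.mono
      intro τ hτ
      show Polynomial.eval τ ((MvPolynomial.aeval pγ) f) = 0
      rw [hcurve_eval τ]
      exact hcurve τ hτ
    have hfinal : Polynomial.eval 0 ((MvPolynomial.aeval pγ) f) = eval p f := by
      rw [hcurve_eval 0]
      have hfun : (fun u => Polynomial.eval 0 (pγ u)) = p := _root_.funext hγ0
      rw [hfun]
    rw [hpoly] at hfinal
    simpa using hfinal.symm
  -- assemble
  constructor
  · rw [Ne, Ideal.eq_top_iff_one]
    intro h1
    have h0 : (0 : (Fin n ⊕ Fin n) → ℂ) ∈ Zset := by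
      show ∑ i, ((0:ℂ) * 0) • χ i = 0
      simp
    have := (MvPolynomial.mem_vanishingIdeal_iff.mp h1) 0 h0
    simp at this
  · intro f g hfg
    have h0 : (aeval v) f * (aeval v) g = 0 := by
      rw [← map_mul]
      apply MvPolynomial.funext (q := 0)
      intro w
      rw [heval]
      have := (MvPolynomial.mem_vanishingIdeal_iff.mp hfg) _ (himg w)
      simpa using this
    rcases mul_eq_zero.mp h0 with h | h
    · exact Or.inl (hvanish f h)
    · exact Or.inr (hvanish g h)

/-- If a torus acts on `V = ⊕ᵢ (ℂ_{χᵢ} ⊕ ℂ_{-χᵢ})` and no character `χᵢ` is critical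
(each `χᵢ` lies in the span of the others), then the zero fiber of the moment map
`m(x,y) = Σᵢ xᵢyᵢ χᵢ` is irreducible, i.e. its vanishing ideal is prime. -/
theorem torus_moment_zero_fiber_irreducible
    (n : ℕ) (E : Type*) [AddCommGroup E] [Module ℂ E]
    (χ : Fin n → E)
    (hnoncrit : ∀ i : Fin n, χ i ∈ Submodule.span ℂ (χ '' {j | j ≠ i}))
    (Z : Set ((Fin n ⊕ Fin n) → ℂ))
    (hZ : Z = {p | ∑ i : Fin n, (p (Sum.inl i) * p (Sum.inr i)) • χ i = 0}) :
    (MvPolynomial.vanishingIdeal ℂ Z).IsPrime := by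
  classical
  subst hZ
  obtain ⟨κ, hκK, hκne⟩ := aux_kernel_vec χ hnoncrit
  -- the kernel submodule
  let L : (Fin n → ℂ) →ₗ[ℂ] E :=
    { toFun := fun c => ∑ i, c i • χ i
      map_add' := fun a b => by
        simp only [Pi.add_apply, add_smul, Finset.sum_add_distrib]
      map_smul' := fun r a => by
        simp only [Pi.smul_apply, smul_eq_mul, mul_smul, ← Finset.smul_sum,
          RingHom.id_apply] }
  let K : Submodule ℂ (Fin n → ℂ) := LinearMap.ker L
  have hKmem : ∀ c : Fin n → ℂ, c ∈ K ↔ ∑ i, c i • χ i = 0 := fun c => Iff.rfl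
  let b : Module.Basis (Fin (Module.finrank ℂ K)) ℂ K := Module.finBasis ℂ K
  refine aux_main χ κ hκK hκne (fun j => ((b j : K) : Fin n → ℂ)) (fun j => (b j).2) ?_
  intro c hc
  refine ⟨fun j => b.repr ⟨c, hc⟩ j, fun i => ?_⟩
  have h1 : ((∑ j, b.repr ⟨c, hc⟩ j • b j : K) : Fin n → ℂ) = c :=
    congrArg Subtype.val (b.sum_repr ⟨c, hc⟩)
  calc c i = ((∑ j, b.repr ⟨c, hc⟩ j • b j : K) : Fin n → ℂ) i := by rw [h1]
    _ = ∑ j, b.repr ⟨c, hc⟩ j * ((b j : K) : Fin n → ℂ) i := by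
        rw [Submodule.coe_sum, Finset.sum_apply]
        simp only [Submodule.coe_smul, Pi.smul_apply, smul_eq_mul]
end

section
/- Let A be a torus with Lie algebra a acting with finite kernel on a symplectic representation V = ⊕_{i=1}^n (ℂ_{χ_i} ⊕ ℂ_{-χ_i}), with moment map m(x,y) = Σ_i x_i y_i χ_i ∈ a*. Then for every irreducible component C of m^{-1}(0) there is a morphism (section) σ : a* → V with m∘σ = id_{a*} and σ(a*) ∩ C ≠ ∅. -/
open scoped BigOperators

/-- The Zariski topology on affine space `σ → ℂ`. -/
def zariskiTop (σ : Type*) : TopologicalSpace (σ → ℂ) :=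
  TopologicalSpace.generateFrom
    {U | ∃ f : MvPolynomial σ ℂ, U = {p | MvPolynomial.eval p f ≠ 0}}

open MvPolynomial

lemma zar_isOpen {σ : Type*} (f : MvPolynomial σ ℂ) :
    @IsOpen _ (zariskiTop σ) {p | MvPolynomial.eval p f ≠ 0} :=
  TopologicalSpace.GenerateOpen.basic _ ⟨f, rfl⟩

lemma zar_basis {σ : Type*} {u : Set (σ → ℂ)} (hu : @IsOpen _ (zariskiTop σ) u) :
    ∀ x ∈ u, ∃ f : MvPolynomial σ ℂ, eval x f ≠ 0 ∧ ∀ y, eval y f ≠ 0 → y ∈ u := by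
  have h : TopologicalSpace.GenerateOpen {U | ∃ f : MvPolynomial σ ℂ, U = {p | eval p f ≠ 0}} u := hu
  clear hu
  induction h with
  | basic U hU =>
      obtain ⟨f, rfl⟩ := hU
      exact fun x hx => ⟨f, hx, fun y hy => hy⟩
  | univ => exact fun x _ => ⟨1, by simp, fun y _ => trivial⟩
  | inter U V hU hV ihU ihV =>
      intro x hx
      obtain ⟨f, hf, hfs⟩ := ihU x hx.1
      obtain ⟨g, hg, hgs⟩ := ihV x hx.2
      refine ⟨f * g, by simp [hf, hg], fun y hy => ?_⟩
      rw [map_mul] at hy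
      exact ⟨hfs y (left_ne_zero_of_mul hy), hgs y (right_ne_zero_of_mul hy)⟩
  | sUnion S hS ih =>
      intro x hx
      obtain ⟨U, hU, hxU⟩ := hx
      obtain ⟨f, hf, hfs⟩ := ih U hU x hxU
      exact ⟨f, hf, fun y hy => ⟨U, hU, hfs y hy⟩⟩

noncomputable def psiMap {σ : Type*} [DecidableEq σ] (e : σ) :
    MvPolynomial σ ℂ →+* Polynomial (MvPolynomial σ ℂ) :=
  MvPolynomial.eval₂Hom (Polynomial.C.comp MvPolynomial.C)
    (fun j => if j = e then Polynomial.X else Polynomial.C (MvPolynomial.X j))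

lemma psi_key {σ : Type*} [DecidableEq σ] (e : σ) (f : MvPolynomial σ ℂ) (p : σ → ℂ) (t : ℂ) :
    eval (Function.update p e t) f =
      Polynomial.eval t ((psiMap e f).map (eval p : MvPolynomial σ ℂ →+* ℂ)) := by
  induction f using MvPolynomial.induction_on with
  | C a => simp [psiMap]
  | add f g hf hg => simp [map_add, hf, hg]
  | mul_X f j hf =>
      rw [show (psiMap e) (f * X j) = (psiMap e) f * (psiMap e) (X j) from map_mul _ _ _,
        Polynomial.map_mul, Polynomial.eval_mul, ← hf]
      rcases eq_or_ne j e with rfl | hje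
      · simp [psiMap]
      · simp [psiMap, hje, Function.update_apply]

lemma eval_ne_on_cyl {σ : Type*} [DecidableEq σ] (e : σ) {f : MvPolynomial σ ℂ}
    {p : σ → ℂ} {t : ℂ} (h : eval (Function.update p e t) f ≠ 0) :
    ∃ j : ℕ, eval p ((psiMap e f).coeff j) ≠ 0 := by
  rw [psi_key] at h
  have h2 : (psiMap e f).map (eval p : MvPolynomial σ ℂ →+* ℂ) ≠ 0 := by
    intro h0; rw [h0] at h; simp at h
  have h3 : ∃ j, ((psiMap e f).map (eval p : MvPolynomial σ ℂ →+* ℂ)).coeff j ≠ 0 := by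
    by_contra hall; push_neg at hall
    exact h2 (Polynomial.ext fun n => by simpa using hall n)
  obtain ⟨j, hj⟩ := h3
  exact ⟨j, by rwa [Polynomial.coeff_map] at hj⟩

lemma cylinder_irreducible {σ : Type*} [DecidableEq σ] (e : σ) {C : Set (σ → ℂ)}
    (hC : @IsIrreducible _ (zariskiTop σ) C) :
    @IsIrreducible _ (zariskiTop σ)
      {q | ∃ p ∈ C, ∃ t : ℂ, q = Function.update p e t} := by
  obtain ⟨⟨p₀, hp₀⟩, hCpre⟩ := hC
  constructor
  · exact ⟨p₀, p₀, hp₀, p₀ e, (Function.update_eq_self e p₀).symm⟩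
  · intro u v hu hv ⟨qu, hquC, hquu⟩ ⟨qv, hqvC, hqvv⟩
    obtain ⟨pu, hpuC, tu, rfl⟩ := hquC
    obtain ⟨pv, hpvC, tv, rfl⟩ := hqvC
    obtain ⟨f, hf, hfsub⟩ := zar_basis hu _ hquu
    obtain ⟨g, hg, hgsub⟩ := zar_basis hv _ hqvv
    obtain ⟨jf, hjf⟩ := eval_ne_on_cyl e hf
    obtain ⟨jg, hjg⟩ := eval_ne_on_cyl e hg
    obtain ⟨p, hpC, hpf, hpg⟩ := hCpre _ _ (zar_isOpen ((psiMap e f).coeff jf))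
      (zar_isOpen ((psiMap e g).coeff jg)) ⟨pu, hpuC, hjf⟩ ⟨pv, hpvC, hjg⟩
    set F := (psiMap e f).map (eval p : MvPolynomial σ ℂ →+* ℂ) with hF
    set G := (psiMap e g).map (eval p : MvPolynomial σ ℂ →+* ℂ) with hG
    have hFne : F ≠ 0 := fun h0 => hpf (by
      have := Polynomial.coeff_map (eval p : MvPolynomial σ ℂ →+* ℂ) jf (p := psiMap e f)
      rw [← this, ← hF, h0]; simp)
    have hGne : G ≠ 0 := fun h0 => hpg (by
      have := Polynomial.coeff_map (eval p : MvPolynomial σ ℂ →+* ℂ) jg (p := psiMap e g)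
      rw [← this, ← hG, h0]; simp)
    have hFG : F * G ≠ 0 := mul_ne_zero hFne hGne
    have : ∃ t : ℂ, Polynomial.eval t (F * G) ≠ 0 := by
      by_contra hall
      push_neg at hall
      exact hFG (Polynomial.funext fun r => by simpa using hall r)
    obtain ⟨t, ht⟩ := this
    rw [Polynomial.eval_mul] at ht
    refine ⟨Function.update p e t, ⟨p, hpC, t, rfl⟩,
      hfsub _ ?_, hgsub _ ?_⟩
    · rw [psi_key]; exact left_ne_zero_of_mul ht
    · rw [psi_key]; exact right_ne_zero_of_mul ht

/-- If a torus acts with finite kernel (the characters `χᵢ` span `a*`) on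
`V = ⊕ᵢ(ℂ_{χᵢ} ⊕ ℂ_{-χᵢ})` with moment map `m(x,y) = Σᵢ xᵢyᵢχᵢ`, then for every
irreducible component `C` of `m⁻¹(0)` there is a polynomial section `σ : a* → V`
with `m ∘ σ = id` whose image meets `C`. -/
theorem torus_moment_map_section (n k : ℕ)
    (χ : Fin n → (Fin k → ℂ))
    (hspan : Submodule.span ℂ (Set.range χ) = ⊤)
    (m : ((Fin n ⊕ Fin n) → ℂ) → (Fin k → ℂ))
    (hm : ∀ p, m p = ∑ i : Fin n, (p (Sum.inl i) * p (Sum.inr i)) • χ i)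
    (C : Set ((Fin n ⊕ Fin n) → ℂ))
    (hCsub : C ⊆ m ⁻¹' {0})
    (hCirr : @IsIrreducible _ (zariskiTop (Fin n ⊕ Fin n)) C)
    (hCmax : ∀ C' : Set ((Fin n ⊕ Fin n) → ℂ), C ⊆ C' → C' ⊆ m ⁻¹' {0} →
      @IsIrreducible _ (zariskiTop (Fin n ⊕ Fin n)) C' → C' = C) :
    ∃ s : (Fin k → ℂ) → ((Fin n ⊕ Fin n) → ℂ),
      (∃ P : (Fin n ⊕ Fin n) → MvPolynomial (Fin k) ℂ,
        ∀ (α : Fin k → ℂ) (j : Fin n ⊕ Fin n), s α j = MvPolynomial.eval α (P j)) ∧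
      (∀ α : Fin k → ℂ, m (s α) = α) ∧
      (Set.range s ∩ C).Nonempty := by
  classical
  letI : TopologicalSpace ((Fin n ⊕ Fin n) → ℂ) := zariskiTop (Fin n ⊕ Fin n)
  -- the open sets where coordinate pair i is not both zero
  set W : Fin n → Set ((Fin n ⊕ Fin n) → ℂ) :=
    fun i => {p | eval p (X (Sum.inl i) : MvPolynomial (Fin n ⊕ Fin n) ℂ) ≠ 0} ∪
      {p | eval p (X (Sum.inr i) : MvPolynomial (Fin n ⊕ Fin n) ℂ) ≠ 0} with hW
  have hWopen : ∀ i, IsOpen (W i) := fun i => (zar_isOpen _).union (zar_isOpen _)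
  -- each W i meets C
  have hWne : ∀ i, (C ∩ W i).Nonempty := by
    intro i
    by_contra hempty
    have hzero : ∀ p ∈ C, p (Sum.inl i) = 0 ∧ p (Sum.inr i) = 0 := by
      intro p hp
      rw [Set.not_nonempty_iff_eq_empty] at hempty
      constructor
      · by_contra hne
        exact Set.eq_empty_iff_forall_notMem.mp hempty p ⟨hp, Or.inl (by simpa using hne)⟩
      · by_contra hne
        exact Set.eq_empty_iff_forall_notMem.mp hempty p ⟨hp, Or.inr (by simpa using hne)⟩
    set C' := {q | ∃ p ∈ C, ∃ t : ℂ, q = Function.update p (Sum.inl i) t} with hC'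
    have hsub : C ⊆ C' := fun p hp =>
      ⟨p, hp, p (Sum.inl i), (Function.update_eq_self _ _).symm⟩
    have hmz : C' ⊆ m ⁻¹' {0} := by
      rintro q ⟨p, hp, t, rfl⟩
      have hp0 := hCsub hp
      simp only [Set.mem_preimage, Set.mem_singleton_iff] at hp0 ⊢
      rw [hm] at hp0 ⊢
      rw [← hp0]
      refine Finset.sum_congr rfl fun j _ => ?_
      rcases eq_or_ne j i with rfl | hji
      · have h2 : Function.update p (Sum.inl j) t (Sum.inr j) = p (Sum.inr j) :=
          Function.update_of_ne (by simp) _ _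
        rw [h2, (hzero p hp).2, mul_zero, mul_zero]
      · rw [Function.update_of_ne (by simp [hji]), Function.update_of_ne (by simp)]
    have hCC := hCmax C' hsub hmz (cylinder_irreducible _ hCirr)
    obtain ⟨p₀, hp₀⟩ := hCirr.1
    have hq : Function.update p₀ (Sum.inl i) 1 ∈ C' := ⟨p₀, hp₀, 1, rfl⟩
    rw [hCC] at hq
    have := (hzero _ hq).1
    rw [Function.update_self] at this
    exact one_ne_zero this
  -- C meets the intersection of all the W i
  have hinter : ∀ t : Finset (Fin n), (C ∩ ⋂ i ∈ t, W i).Nonempty := by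
    intro t
    induction t using Finset.induction_on with
    | empty => simpa using hCirr.1
    | @insert a t ha ih =>
        obtain ⟨p, hpC, hpa, hps⟩ := hCirr.2 (W a) (⋂ i ∈ t, W i) (hWopen a)
          (isOpen_biInter_finset fun i _ => hWopen i) (hWne a) ih
        exact ⟨p, hpC, by rw [Finset.set_biInter_insert]; exact ⟨hpa, hps⟩⟩
  obtain ⟨v, hvC, hvW⟩ := hinter Finset.univ
  have hv : ∀ i : Fin n, v (Sum.inl i) ≠ 0 ∨ v (Sum.inr i) ≠ 0 := by
    intro i
    have := Set.mem_iInter₂.mp hvW i (Finset.mem_univ i)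
    simpa [hW] using this
  -- linear right inverse of the weight map
  set T : (Fin n → ℂ) →ₗ[ℂ] (Fin k → ℂ) := Fintype.linearCombination ℂ χ with hT
  have hTsurj : LinearMap.range T = ⊤ := by
    rw [LinearMap.range_eq_top]
    intro α
    have hα : α ∈ Submodule.span ℂ (Set.range χ) := hspan ▸ Submodule.mem_top
    obtain ⟨c, hc⟩ := (Finsupp.mem_span_range_iff_exists_finsupp).mp hα
    refine ⟨fun i => c i, ?_⟩
    rw [hT, Fintype.linearCombination_apply]
    rw [← hc, Finsupp.sum_fintype _ _ (fun i => by simp)]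
  obtain ⟨L, hL⟩ := T.exists_rightInverse_of_surjective hTsurj
  have hTL : ∀ α, ∑ i : Fin n, (L α i) • χ i = α := by
    intro α
    have := congrFun (congrArg DFunLike.coe hL) α
    simp only [LinearMap.coe_comp, Function.comp_apply, LinearMap.id_coe, id_eq] at this
    have h2 : T (L α) = ∑ i : Fin n, (L α i) • χ i := by
      rw [hT, Fintype.linearCombination_apply]
    rw [← h2]
    exact this
  -- the section
  set b : (Fin n ⊕ Fin n) → ℂ := Sum.elim
    (fun i => if v (Sum.inr i) = 0 then 0 else (v (Sum.inr i))⁻¹)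
    (fun i => if v (Sum.inr i) = 0 then (v (Sum.inl i))⁻¹ else 0) with hb
  set idx : (Fin n ⊕ Fin n) → Fin n := Sum.elim id id with hidx
  set s : (Fin k → ℂ) → (Fin n ⊕ Fin n) → ℂ := fun α j => v j + b j * L α (idx j) with hs
  have hprod : ∀ (α : Fin k → ℂ) (i : Fin n),
      s α (Sum.inl i) * s α (Sum.inr i) = v (Sum.inl i) * v (Sum.inr i) + L α i := by
    intro α i
    rcases eq_or_ne (v (Sum.inr i)) 0 with h0 | h0
    · have hx : v (Sum.inl i) ≠ 0 := by
        rcases hv i with h | h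
        · exact h
        · exact absurd h0 h
      simp only [hs, hb, hidx, Sum.elim_inl, Sum.elim_inr, if_pos h0, id_eq]
      field_simp
      ring
    · simp only [hs, hb, hidx, Sum.elim_inl, Sum.elim_inr, if_neg h0, id_eq]
      field_simp
      ring
  have hsec : ∀ α, m (s α) = α := by
    intro α
    have hv0 : m v = 0 := hCsub hvC
    rw [hm] at hv0
    rw [hm]
    have : ∀ i ∈ Finset.univ, (s α (Sum.inl i) * s α (Sum.inr i)) • χ i
        = (v (Sum.inl i) * v (Sum.inr i)) • χ i + (L α i) • χ i := by
      intro i _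
      rw [hprod, add_smul]
    rw [Finset.sum_congr rfl this, Finset.sum_add_distrib, hv0, zero_add, hTL]
  refine ⟨s, ⟨fun j => MvPolynomial.C (v j) + MvPolynomial.C (b j) *
      ∑ r : Fin k, MvPolynomial.X r *
        MvPolynomial.C (L (fun j' => if r = j' then 1 else 0) (idx j)), ?_⟩, hsec, ?_⟩
  · intro α j
    have hLin : L α (idx j) = ∑ r : Fin k,
        α r * (L (fun j' => if r = j' then 1 else 0)) (idx j) := by
      rw [LinearMap.pi_apply_eq_sum_univ L α]
      simp [Finset.sum_apply]
    rw [hs]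
    simp only [map_add, map_mul, map_sum, MvPolynomial.eval_C, MvPolynomial.eval_X]
    rw [hLin]
  · refine ⟨v, ⟨0, ?_⟩, hvC⟩
    funext j
    rw [hs]
    simp
end

section
/- Let g be a complex semisimple Lie algebra with root system Δ, positive roots Δ⁺ and Weyl group W. Let χ be a dominant weight with 2χ = α ∈ Δ⁺. Then α is a long root in an irreducible component of Δ of type C_n (n ≥ 1, with C_1 = A_1), and χ is the first fundamental weight of that component. -/
open scoped RealInnerProductSpace


set_option linter.unusedSectionVars false

section Aux

variable {E : Type*} [NormedAddCommGroup E] [InnerProductSpace ℝ E]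
variable {Δ : Finset E}

/-- `γ/2` is an integral weight. -/
def IsHalf (Δ : Finset E) (γ : E) : Prop := ∀ β ∈ Δ, ∃ z : ℤ, ⟪γ, β⟫ / ⟪β, β⟫ = (z : ℝ)

lemma root_ne_zero (hzero : (0:E) ∉ Δ) {γ : E} (hγ : γ ∈ Δ) : γ ≠ 0 :=
  fun h => hzero (h ▸ hγ)

lemma inner_self_pos_of_mem (hzero : (0:E) ∉ Δ) {γ : E} (hγ : γ ∈ Δ) : 0 < ⟪γ, γ⟫ := by
  rcases lt_or_eq_of_le (real_inner_self_nonneg (x := γ)) with h | h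
  · exact h
  · exact absurd (inner_self_eq_zero.mp h.symm) (root_ne_zero hzero hγ)

lemma neg_mem_root (hrefl : ∀ α ∈ Δ, ∀ β ∈ Δ, β - (2 * ⟪β, α⟫ / ⟪α, α⟫) • α ∈ Δ)
    (hzero : (0:E) ∉ Δ) {γ : E} (hγ : γ ∈ Δ) : -γ ∈ Δ := by
  have h := hrefl γ hγ γ hγ
  have hg := inner_self_pos_of_mem hzero hγ
  have h2 : 2 * ⟪γ, γ⟫ / ⟪γ, γ⟫ = 2 := by field_simp
  rw [h2] at h
  have h3 : γ - (2:ℝ) • γ = -γ := by module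
  rwa [h3] at h

lemma keyA (hzero : (0:E) ∉ Δ)
    (hreduced : ∀ α ∈ Δ, ∀ t : ℝ, t • α ∈ Δ → t = 1 ∨ t = -1)
    (hcrys : ∀ α ∈ Δ, ∀ β ∈ Δ, ∃ z : ℤ, 2 * ⟪β, α⟫ / ⟪α, α⟫ = (z : ℝ))
    {γ β : E} (hγ : γ ∈ Δ) (hP : IsHalf Δ γ) (hβ : β ∈ Δ)
    (hne : ⟪γ, β⟫ ≠ 0) (h1 : β ≠ γ) (h2 : β ≠ -γ) :
    2 * ⟪β, β⟫ = ⟪γ, γ⟫ ∧ (2 * ⟪γ, β⟫ = ⟪γ, γ⟫ ∨ 2 * ⟪γ, β⟫ = -⟪γ, γ⟫) := by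
  set a := ⟪γ, β⟫ with ha
  have hb : 0 < ⟪β, β⟫ := inner_self_pos_of_mem hzero hβ
  have hg : 0 < ⟪γ, γ⟫ := inner_self_pos_of_mem hzero hγ
  set b := ⟪β, β⟫
  set g := ⟪γ, γ⟫
  -- strict Cauchy-Schwarz
  have hCS : a ^ 2 < g * b := by
    have hnn : (0:ℝ) ≤ ⟪b • γ - a • β, b • γ - a • β⟫ := real_inner_self_nonneg
    have hexp : ⟪b • γ - a • β, b • γ - a • β⟫ = b * (g * b - a ^ 2) := by
      simp only [inner_sub_left, inner_sub_right, real_inner_smul_left, real_inner_smul_right]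
      rw [real_inner_comm γ β, ← ha]
      ring
    have hle : 0 ≤ g * b - a ^ 2 := by nlinarith
    rcases lt_or_eq_of_le hle with h | h
    · linarith
    · exfalso
      have hz0 : ⟪b • γ - a • β, b • γ - a • β⟫ = 0 := by rw [hexp, ← h]; ring
      have hv : a • β = b • γ := by
        have := sub_eq_zero.mp (inner_self_eq_zero.mp hz0)
        linear_combination (norm := module) -this
      have hba : (a⁻¹ * b) • γ = β := by
        rw [mul_smul, ← hv, smul_smul, inv_mul_cancel₀ hne, one_smul]
      rcases hreduced γ hγ (a⁻¹ * b) (hba ▸ hβ) with h | h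
      · exact h1 (by rw [← hba, h, one_smul])
      · exact h2 (by rw [← hba, h, neg_one_smul])
  obtain ⟨z, hz⟩ := hP β hβ
  obtain ⟨v, hv⟩ := hcrys γ hγ β hβ
  rw [real_inner_comm γ β, ← ha] at hv
  have hz' : a = z * b := (div_eq_iff (show ⟪β, β⟫ ≠ 0 from hb.ne')).mp hz
  have hv' : 2 * a = v * g := (div_eq_iff (show ⟪γ, γ⟫ ≠ 0 from hg.ne')).mp hv
  have hvz : v * z = 1 := by
    have key : (v:ℝ) * (z:ℝ) * (g * b) = 2 * a ^ 2 := by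
      linear_combination (-2*a)*hz' + (-(z:ℝ)*b)*hv'
    have ha2 : 0 < a ^ 2 := by positivity
    have hgb : 0 < g * b := mul_pos hg hb
    have hlt : ((v * z : ℤ) : ℝ) < 2 := by push_cast; nlinarith
    have hgt : (0:ℝ) < ((v * z : ℤ) : ℝ) := by push_cast; nlinarith
    have h1 : (v * z : ℤ) < 2 := by exact_mod_cast hlt
    have h2 : 0 < (v * z : ℤ) := by exact_mod_cast hgt
    omega
  rcases Int.eq_one_or_neg_one_of_mul_eq_one' hvz with ⟨hv1, hz1⟩ | ⟨hv1, hz1⟩ <;>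
    subst hv1 <;> subst hz1 <;>
    constructor <;> push_cast at hz' hv' <;> try linarith
  · left; linarith
  · right; linarith

end Aux

section More
variable {E : Type*} [NormedAddCommGroup E] [InnerProductSpace ℝ E]
variable {Δ : Finset E}

lemma refl_sub (hrefl : ∀ α ∈ Δ, ∀ β ∈ Δ, β - (2 * ⟪β, α⟫ / ⟪α, α⟫) • α ∈ Δ)
    (hzero : (0:E) ∉ Δ) {γ β : E} (hγ : γ ∈ Δ) (hβ : β ∈ Δ)
    (h : 2 * ⟪β, γ⟫ = ⟪γ, γ⟫) : β - γ ∈ Δ := by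
  have hg := inner_self_pos_of_mem hzero hγ
  have h1 := hrefl γ hγ β hβ
  have hc : 2 * ⟪β, γ⟫ / ⟪γ, γ⟫ = 1 := by rw [h]; field_simp
  rw [hc, one_smul] at h1
  exact h1

lemma orth_of_long (hzero : (0:E) ∉ Δ)
    (hreduced : ∀ α ∈ Δ, ∀ t : ℝ, t • α ∈ Δ → t = 1 ∨ t = -1)
    (hcrys : ∀ α ∈ Δ, ∀ β ∈ Δ, ∃ z : ℤ, 2 * ⟪β, α⟫ / ⟪α, α⟫ = (z : ℝ))
    {γ γ' : E} (hγ : γ ∈ Δ) (hγ' : γ' ∈ Δ) (hP : IsHalf Δ γ)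
    (hnorm : ⟪γ, γ⟫ = ⟪γ', γ'⟫) (h1 : γ' ≠ γ) (h2 : γ' ≠ -γ) : ⟪γ, γ'⟫ = 0 := by
  by_contra hne
  have := (keyA hzero hreduced hcrys hγ hP hγ' hne h1 h2).1
  have hg := inner_self_pos_of_mem hzero hγ'
  rw [hnorm] at this
  linarith

lemma keyB (hzero : (0:E) ∉ Δ)
    (hreduced : ∀ α ∈ Δ, ∀ t : ℝ, t • α ∈ Δ → t = 1 ∨ t = -1)
    (hcrys : ∀ α ∈ Δ, ∀ β ∈ Δ, ∃ z : ℤ, 2 * ⟪β, α⟫ / ⟪α, α⟫ = (z : ℝ))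
    (hrefl : ∀ α ∈ Δ, ∀ β ∈ Δ, β - (2 * ⟪β, α⟫ / ⟪α, α⟫) • α ∈ Δ)
    {γ β : E} (hγ : γ ∈ Δ) (hP : IsHalf Δ γ) (hβ : β ∈ Δ)
    (hip : 2 * ⟪γ, β⟫ = ⟪γ, γ⟫) (hne : β ≠ γ) :
    (2:ℝ) • β - γ ∈ Δ ∧ β - γ ∈ Δ ∧ IsHalf Δ ((2:ℝ) • β - γ) ∧
    ⟪γ, (2:ℝ) • β - γ⟫ = 0 ∧ ⟪(2:ℝ) • β - γ, (2:ℝ) • β - γ⟫ = ⟪γ, γ⟫ := by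
  have hg := inner_self_pos_of_mem hzero hγ
  have hb := inner_self_pos_of_mem hzero hβ
  have hane : ⟪γ, β⟫ ≠ 0 := by intro h; rw [h] at hip; linarith
  have hne2 : β ≠ -γ := by
    intro h
    rw [h, inner_neg_right] at hip
    linarith
  have hlen : 2 * ⟪β, β⟫ = ⟪γ, γ⟫ := (keyA hzero hreduced hcrys hγ hP hβ hane hne hne2).1
  have hδ : β - γ ∈ Δ := refl_sub hrefl hzero hγ hβ (by rw [real_inner_comm]; exact hip)
  have hip2 : ⟪γ, β - γ⟫ = -(⟪γ, γ⟫ / 2) := by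
    rw [inner_sub_right]; linarith
  have hδδ : ⟪β - γ, β - γ⟫ = ⟪γ, γ⟫ / 2 := by
    simp only [inner_sub_left, inner_sub_right, real_inner_comm γ β]
    linarith
  have h2f : (2:ℝ) • β - γ ∈ Δ := by
    have h1 := hrefl (β - γ) hδ γ hγ
    have hc : 2 * ⟪γ, β - γ⟫ / ⟪β - γ, β - γ⟫ = -2 := by
      rw [hip2, hδδ]; field_simp
    rw [hc] at h1
    have he : γ - (-2:ℝ) • (β - γ) = (2:ℝ) • β - γ := by module
    rwa [he] at h1
  refine ⟨h2f, hδ, ?_, ?_, ?_⟩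
  · intro ρ hρ
    obtain ⟨z, hz⟩ := hcrys ρ hρ β hβ
    obtain ⟨w, hw⟩ := hP ρ hρ
    refine ⟨z - w, ?_⟩
    rw [inner_sub_left, real_inner_smul_left, sub_div, hz, hw]
    push_cast; ring
  · rw [inner_sub_right, real_inner_smul_right]; linarith
  · simp only [inner_sub_left, inner_sub_right, real_inner_smul_left,
      real_inner_smul_right, real_inner_comm γ β]
    linarith

lemma isHalf_neg {γ : E} (hP : IsHalf Δ γ) : IsHalf Δ (-γ) := by
  intro β hβ
  obtain ⟨z, hz⟩ := hP β hβ
  exact ⟨-z, by rw [inner_neg_left, neg_div, hz]; push_cast; ring⟩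

end More

section Main
variable {E : Type*} [NormedAddCommGroup E] [InnerProductSpace ℝ E]

/-- `γ` is connected to `α` by explicit witnesses. -/
def CRel (Δ : Finset E) (α γ : E) : Prop :=
  γ = α ∨ γ = -α ∨ ∃ β ∈ Δ, (2:ℝ) • β = α + γ

/-- `γ` is a long root of the `Cₙ` component of `α`. -/
def CLam (Δ : Finset E) (α γ : E) : Prop :=
  γ ∈ Δ ∧ IsHalf Δ γ ∧ ⟪γ, γ⟫ = ⟪α, α⟫ ∧ CRel Δ α γ

/-- `y` is a long or short root of the `Cₙ` component of `α`. -/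
def CQp (Δ : Finset E) (α y : E) : Prop :=
  CLam Δ α y ∨ ∃ γ γ', CLam Δ α γ ∧ CLam Δ α γ' ∧ γ ≠ γ' ∧ γ ≠ -γ' ∧ (2:ℝ) • y = γ + γ'

variable {Δ : Finset E}
variable (hzero : (0:E) ∉ Δ)
variable (hreduced : ∀ α ∈ Δ, ∀ t : ℝ, t • α ∈ Δ → t = 1 ∨ t = -1)
variable (hcrys : ∀ α ∈ Δ, ∀ β ∈ Δ, ∃ z : ℤ, 2 * ⟪β, α⟫ / ⟪α, α⟫ = (z : ℝ))
variable (hrefl : ∀ α ∈ Δ, ∀ β ∈ Δ, β - (2 * ⟪β, α⟫ / ⟪α, α⟫) • α ∈ Δ)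
variable {α : E} (hαΔ : α ∈ Δ) (hPα : IsHalf Δ α)

include hzero hreduced hcrys hαΔ hPα in
lemma lam_alpha_orth {γ : E} (hL : CLam Δ α γ) (h1 : γ ≠ α) (h2 : γ ≠ -α) :
    ⟪α, γ⟫ = 0 :=
  orth_of_long hzero hreduced hcrys hαΔ hL.1 hPα hL.2.2.1.symm h1 h2

include hzero hreduced hcrys in
lemma lam_orth {γ γ' : E} (hL : CLam Δ α γ) (hL' : CLam Δ α γ') (h1 : γ' ≠ γ) (h2 : γ' ≠ -γ) :
    ⟪γ, γ'⟫ = 0 :=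
  orth_of_long hzero hreduced hcrys hL.1 hL'.1 hL.2.1
    (hL.2.2.1.trans hL'.2.2.1.symm) h1 h2

include hzero hreduced hcrys hrefl hαΔ hPα in
lemma lam_neg {γ : E} (hL : CLam Δ α γ) : CLam Δ α (-γ) := by
  obtain ⟨hγΔ, hγP, hγn, hγR⟩ := hL
  refine ⟨neg_mem_root hrefl hzero hγΔ, isHalf_neg hγP, by rwa [inner_neg_neg], ?_⟩
  by_cases h1 : γ = α
  · exact Or.inr (Or.inl (by rw [h1]))
  by_cases h2 : γ = -α
  · exact Or.inl (by rw [h2, neg_neg])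
  have horth : ⟪α, γ⟫ = 0 :=
    orth_of_long hzero hreduced hcrys hαΔ hγΔ hPα hγn.symm h1 h2
  rcases hγR with h | h | ⟨β, hβΔ, hβ⟩
  · exact absurd h h1
  · exact absurd h h2
  · refine Or.inr (Or.inr ⟨β - γ, ?_, by rw [smul_sub, hβ]; module⟩)
    refine refl_sub hrefl hzero hγΔ hβΔ ?_
    have : ⟪(2:ℝ) • β, γ⟫ = ⟪α + γ, γ⟫ := by rw [hβ]
    rw [real_inner_smul_left, inner_add_left, horth] at this
    linarith

include hzero hreduced hcrys hrefl hαΔ hPα in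
lemma stepL' {γ y : E} (hL : CLam Δ α γ) (hy : y ∈ Δ)
    (hip : 2 * ⟪γ, y⟫ = ⟪γ, γ⟫) (hne : y ≠ γ) : CQp Δ α y := by
  obtain ⟨hγΔ, hγP, hγn, hγR⟩ := hL
  have hg : 0 < ⟪γ, γ⟫ := inner_self_pos_of_mem hzero hγΔ
  obtain ⟨hFΔ, hδΔ, hFP, hForth, hFn⟩ := keyB hzero hreduced hcrys hrefl hγΔ hγP hy hip hne
  set F := (2:ℝ) • y - γ with hF
  have hy2 : (2:ℝ) • y = γ + F := by rw [hF]; module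
  have hFnα : ⟪F, F⟫ = ⟪α, α⟫ := by rw [hFn, hγn]
  have hFne1 : γ ≠ F := by
    intro h; rw [← h] at hForth; linarith
  have hFne2 : γ ≠ -F := by
    intro h
    have : ⟪γ, F⟫ = -⟪F, F⟫ := by rw [h, inner_neg_left]
    rw [hForth, hFn] at this; linarith
  have hRel : CRel Δ α F := by
    by_cases hc1 : F = α
    · exact Or.inl hc1
    by_cases hc2 : F = -α
    · exact Or.inr (Or.inl hc2)
    have hαF : ⟪α, F⟫ = 0 :=
      orth_of_long hzero hreduced hcrys hαΔ hFΔ hPα hFnα.symm hc1 hc2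
    by_cases h1 : γ = α
    · exact Or.inr (Or.inr ⟨y, hy, by rw [hy2, h1]⟩)
    by_cases h2 : γ = -α
    · -- y + α is a root
      have hyα : 2 * ⟪y, -α⟫ = ⟪-α, -α⟫ := by
        have : ⟪(2:ℝ) • y, α⟫ = ⟪γ + F, α⟫ := by rw [hy2]
        rw [real_inner_smul_left, inner_add_left, h2, real_inner_comm α F, hαF,
          inner_neg_left] at this
        rw [inner_neg_right, inner_neg_neg]
        linarith
      have hyαΔ : y - -α ∈ Δ := refl_sub hrefl hzero (neg_mem_root hrefl hzero hαΔ) hy hyα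
      refine Or.inr (Or.inr ⟨y - -α, hyαΔ, ?_⟩)
      rw [smul_sub, hy2, h2]; module
    -- generic case
    have hαγ : ⟪α, γ⟫ = 0 :=
      orth_of_long hzero hreduced hcrys hαΔ hγΔ hPα hγn.symm h1 h2
    rcases hγR with h | h | ⟨β₀, hβ₀Δ, hβ₀⟩
    · exact absurd h h1
    · exact absurd h h2
    have hipβy : 2 * ⟪β₀, y⟫ = ⟪y, y⟫ := by
      have e1 : ⟪(2:ℝ) • β₀, (2:ℝ) • y⟫ = ⟪α + γ, γ + F⟫ := by rw [hβ₀, hy2]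
      have e2 : ⟪(2:ℝ) • y, (2:ℝ) • y⟫ = ⟪γ + F, γ + F⟫ := by rw [hy2]
      simp only [real_inner_smul_left, real_inner_smul_right, inner_add_left,
        inner_add_right] at e1 e2
      rw [hαγ, hαF, hForth] at e1
      rw [hForth, real_inner_comm γ F, hForth, hFn] at e2
      linarith
    have hβy : β₀ - y ∈ Δ := refl_sub hrefl hzero hy hβ₀Δ hipβy
    have hw : (2:ℝ) • (β₀ - y) = α + -F := by
      rw [smul_sub, hβ₀, hy2]; module
    have hRelnF : CRel Δ α (-F) := Or.inr (Or.inr ⟨β₀ - y, hβy, hw⟩)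
    -- transfer to F
    have hnF : CLam Δ α (-F) :=
      ⟨neg_mem_root hrefl hzero hFΔ, isHalf_neg hFP, by rwa [inner_neg_neg], hRelnF⟩
    have := lam_neg hzero hreduced hcrys hrefl hαΔ hPα hnF
    rw [neg_neg] at this
    exact this.2.2.2
  exact Or.inr ⟨γ, F, ⟨hγΔ, hγP, hγn, hγR⟩, ⟨hFΔ, hFP, hFnα, hRel⟩, hFne1, hFne2, hy2⟩

include hzero hreduced hcrys hrefl hαΔ hPα in
lemma stepL {γ y : E} (hL : CLam Δ α γ) (hy : y ∈ Δ) (hne : ⟪γ, y⟫ ≠ 0) : CQp Δ α y := by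
  by_cases h1 : y = γ
  · exact Or.inl (h1 ▸ hL)
  by_cases h2 : y = -γ
  · exact Or.inl (h2 ▸ lam_neg hzero hreduced hcrys hrefl hαΔ hPα hL)
  rcases (keyA hzero hreduced hcrys hL.1 hL.2.1 hy hne h1 h2).2 with h | h
  · exact stepL' hzero hreduced hcrys hrefl hαΔ hPα hL hy h h1
  · have hLn := lam_neg hzero hreduced hcrys hrefl hαΔ hPα hL
    refine stepL' hzero hreduced hcrys hrefl hαΔ hPα hLn hy ?_ ?_
    · rw [inner_neg_left, inner_neg_neg]; linarith
    · intro h'; exact h2 h'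

include hzero hreduced hcrys hrefl hαΔ hPα in
lemma qp_step {x y : E} (hQ : CQp Δ α x) (hy : y ∈ Δ) (hne : ⟪x, y⟫ ≠ 0) : CQp Δ α y := by
  rcases hQ with hL | ⟨γ, γ', hLγ, hLγ', _, _, h2x⟩
  · exact stepL hzero hreduced hcrys hrefl hαΔ hPα hL hy hne
  · have h : ⟪γ, y⟫ + ⟪γ', y⟫ = 2 * ⟪x, y⟫ := by
      have : ⟪(2:ℝ) • x, y⟫ = ⟪γ + γ', y⟫ := by rw [h2x]
      rw [real_inner_smul_left, inner_add_left] at this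
      linarith
    by_cases hc : ⟪γ, y⟫ = 0
    · have : ⟪γ', y⟫ ≠ 0 := by
        intro h0; rw [hc, h0] at h; exact hne (by linarith)
      exact stepL hzero hreduced hcrys hrefl hαΔ hPα hLγ' hy this
    · exact stepL hzero hreduced hcrys hrefl hαΔ hPα hLγ hy hc

include hzero hreduced hcrys hrefl hαΔ hPα in
lemma qp_of_chain {x : E}
    (h : Relation.ReflTransGen
      (fun u v => u ∈ (Δ : Set E) ∧ v ∈ (Δ : Set E) ∧ ⟪u, v⟫ ≠ 0) α x) :
    CQp Δ α x := by
  induction h with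
  | refl => exact Or.inl ⟨hαΔ, hPα, rfl, Or.inl rfl⟩
  | tail h1 h2 ih =>
      exact qp_step hzero hreduced hcrys hrefl hαΔ hPα ih (Finset.mem_coe.mp h2.2.1) h2.2.2

include hzero hreduced hcrys hrefl hαΔ hPα in
lemma crossDiff {γ γ' : E} (hL : CLam Δ α γ) (hL' : CLam Δ α γ')
    (h1 : γ ≠ γ') (h2 : γ ≠ -γ') : ∃ β ∈ Δ, (2:ℝ) • β = γ - γ' := by
  have hg : 0 < ⟪α, α⟫ := inner_self_pos_of_mem hzero hαΔ
  by_cases hc1 : γ' = α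
  · subst hc1
    rcases hL.2.2.2 with h | h | ⟨β₀, hβ₀Δ, hβ₀⟩
    · exact absurd h h1
    · exact absurd h h2
    · have horth : ⟪γ', γ⟫ = 0 :=
        lam_alpha_orth hzero hreduced hcrys hαΔ hPα hL h1 h2
      have hip : 2 * ⟪β₀, γ'⟫ = ⟪γ', γ'⟫ := by
        have : ⟪(2:ℝ) • β₀, γ'⟫ = ⟪γ' + γ, γ'⟫ := by rw [hβ₀]
        rw [real_inner_smul_left, inner_add_left, real_inner_comm γ' γ, horth] at this
        linarith
      exact ⟨β₀ - γ', refl_sub hrefl hzero hαΔ hβ₀Δ hip, by rw [smul_sub, hβ₀]; module⟩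
  by_cases hc2 : γ' = -α
  · subst hc2
    rw [neg_neg] at h2
    rcases hL.2.2.2 with h | h | ⟨β₀, hβ₀Δ, hβ₀⟩
    · exact absurd h h2
    · exact absurd h h1
    · exact ⟨β₀, hβ₀Δ, by rw [hβ₀]; module⟩
  have horth' : ⟪α, γ'⟫ = 0 := lam_alpha_orth hzero hreduced hcrys hαΔ hPα hL' hc1 hc2
  obtain ⟨β₁, hβ₁Δ, hβ₁⟩ : ∃ β ∈ Δ, (2:ℝ) • β = α + γ' := by
    rcases hL'.2.2.2 with h | h | h
    · exact absurd h hc1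
    · exact absurd h hc2
    · exact h
  have hipβ₁γ' : 2 * ⟪β₁, γ'⟫ = ⟪γ', γ'⟫ := by
    have : ⟪(2:ℝ) • β₁, γ'⟫ = ⟪α + γ', γ'⟫ := by rw [hβ₁]
    rw [real_inner_smul_left, inner_add_left, horth'] at this
    linarith
  by_cases hd1 : γ = α
  · refine ⟨β₁ - γ', refl_sub hrefl hzero hL'.1 hβ₁Δ hipβ₁γ', ?_⟩
    rw [smul_sub, hβ₁, hd1]; module
  by_cases hd2 : γ = -α
  · refine ⟨-β₁, neg_mem_root hrefl hzero hβ₁Δ, ?_⟩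
    rw [smul_neg, hβ₁, hd2]; module
  have horth : ⟪α, γ⟫ = 0 := lam_alpha_orth hzero hreduced hcrys hαΔ hPα hL hd1 hd2
  obtain ⟨β₀, hβ₀Δ, hβ₀⟩ : ∃ β ∈ Δ, (2:ℝ) • β = α + γ := by
    rcases hL.2.2.2 with h | h | h
    · exact absurd h hd1
    · exact absurd h hd2
    · exact h
  have hγγ' : ⟪γ, γ'⟫ = 0 := lam_orth hzero hreduced hcrys hL hL' (Ne.symm h1)
    (by intro h; exact h2 (by rw [h, neg_neg]))
  have hip : 2 * ⟪β₀, β₁⟫ = ⟪β₁, β₁⟫ := by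
    have e1 : ⟪(2:ℝ) • β₀, (2:ℝ) • β₁⟫ = ⟪α + γ, α + γ'⟫ := by rw [hβ₀, hβ₁]
    have e2 : ⟪(2:ℝ) • β₁, (2:ℝ) • β₁⟫ = ⟪α + γ', α + γ'⟫ := by rw [hβ₁]
    simp only [real_inner_smul_left, real_inner_smul_right, inner_add_left,
      inner_add_right] at e1 e2
    rw [horth', hγγ'] at e1
    rw [real_inner_comm α γ, horth] at e1
    rw [horth', real_inner_comm α γ', horth', hL'.2.2.1] at e2
    linarith
  refine ⟨β₀ - β₁, refl_sub hrefl hzero hβ₁Δ hβ₀Δ hip, ?_⟩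
  rw [smul_sub, hβ₀, hβ₁]; module

include hzero hreduced hcrys hrefl hαΔ hPα in
lemma cross {γ γ' : E} (hL : CLam Δ α γ) (hL' : CLam Δ α γ')
    (h1 : γ ≠ γ') (h2 : γ ≠ -γ') : ∃ β ∈ Δ, (2:ℝ) • β = γ + γ' := by
  have hLn := lam_neg hzero hreduced hcrys hrefl hαΔ hPα hL'
  obtain ⟨β, hβ, he⟩ := crossDiff hzero hreduced hcrys hrefl hαΔ hPα hL hLn h2
    (by intro h; rw [neg_neg] at h; exact h1 h)
  exact ⟨β, hβ, by rw [he]; module⟩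

include hzero hreduced hcrys hrefl hαΔ hPα in
lemma conn {γ : E} (hL : CLam Δ α γ) :
    Relation.ReflTransGen
      (fun u v => u ∈ (Δ : Set E) ∧ v ∈ (Δ : Set E) ∧ ⟪u, v⟫ ≠ 0) α γ := by
  have hg : 0 < ⟪α, α⟫ := inner_self_pos_of_mem hzero hαΔ
  by_cases hd1 : γ = α
  · rw [hd1]
  by_cases hd2 : γ = -α
  · refine Relation.ReflTransGen.single ⟨Finset.mem_coe.mpr hαΔ, Finset.mem_coe.mpr (hd2 ▸ hL.1), ?_⟩
    rw [hd2, inner_neg_right]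
    intro h; linarith
  have horth : ⟪α, γ⟫ = 0 := lam_alpha_orth hzero hreduced hcrys hαΔ hPα hL hd1 hd2
  obtain ⟨β₀, hβ₀Δ, hβ₀⟩ : ∃ β ∈ Δ, (2:ℝ) • β = α + γ := by
    rcases hL.2.2.2 with h | h | h
    · exact absurd h hd1
    · exact absurd h hd2
    · exact h
  have hip1 : 2 * ⟪α, β₀⟫ = ⟪α, α⟫ := by
    have : ⟪α, (2:ℝ) • β₀⟫ = ⟪α, α + γ⟫ := by rw [hβ₀]
    rw [real_inner_smul_right, inner_add_right, horth] at this
    linarith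
  have hip2 : 2 * ⟪β₀, γ⟫ = ⟪γ, γ⟫ := by
    have : ⟪(2:ℝ) • β₀, γ⟫ = ⟪α + γ, γ⟫ := by rw [hβ₀]
    rw [real_inner_smul_left, inner_add_left, horth] at this
    linarith
  have hgγ : 0 < ⟪γ, γ⟫ := inner_self_pos_of_mem hzero hL.1
  refine Relation.ReflTransGen.tail (Relation.ReflTransGen.single
    ⟨Finset.mem_coe.mpr hαΔ, Finset.mem_coe.mpr hβ₀Δ, by intro h; rw [h] at hip1; linarith⟩)
    ⟨Finset.mem_coe.mpr hβ₀Δ, Finset.mem_coe.mpr hL.1, by intro h; rw [h] at hip2; linarith⟩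

end Main

/-- If `χ` is a dominant integral weight of a root system `Δ` with `2χ = α` a positive
root, then `α` is a long root of an irreducible component of `Δ` of type `Cₙ`
(`n ≥ 1`, with `C₁ = A₁`), and `χ` is the first fundamental weight of that component. -/
theorem half_root_dominant_weight_type_C
    (E : Type*) [NormedAddCommGroup E] [InnerProductSpace ℝ E] [FiniteDimensional ℝ E]
    (Δ : Finset E)
    (hzero : (0 : E) ∉ Δ)
    (hreduced : ∀ α ∈ Δ, ∀ t : ℝ, t • α ∈ Δ → t = 1 ∨ t = -1)
    (hcrys : ∀ α ∈ Δ, ∀ β ∈ Δ, ∃ z : ℤ, 2 * ⟪β, α⟫ / ⟪α, α⟫ = (z : ℝ))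
    (hrefl : ∀ α ∈ Δ, ∀ β ∈ Δ, β - (2 * ⟪β, α⟫ / ⟪α, α⟫) • α ∈ Δ)
    -- positive system
    (Δpos : Finset E)
    (hpos_sub : Δpos ⊆ Δ)
    (hpos_cover : ∀ γ ∈ Δ, γ ∈ Δpos ∨ -γ ∈ Δpos)
    (hpos_disj : ∀ γ ∈ Δpos, -γ ∉ Δpos)
    (hpos_add : ∀ γ ∈ Δpos, ∀ δ ∈ Δpos, γ + δ ∈ Δ → γ + δ ∈ Δpos)
    -- χ is a dominant integral weight with 2χ = α a positive root
    (χ : E)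
    (hdom : ∀ γ ∈ Δpos, ∃ z : ℤ, 0 ≤ z ∧ 2 * ⟪χ, γ⟫ / ⟪γ, γ⟫ = (z : ℝ))
    (α : E) (hα : α ∈ Δpos)
    (h2χ : (2 : ℝ) • χ = α) :
    ∃ (N : ℕ) (e : Fin (N + 1) → E),
      -- the `e i` are pairwise orthogonal of equal nonzero length
      (∀ i j, i ≠ j → ⟪e i, e j⟫ = 0) ∧
      (∀ i, e i ≠ 0) ∧
      (∀ i j, ‖e i‖ = ‖e j‖) ∧
      -- the irreducible component of Δ containing α is of type Cₙ:
      {β ∈ (Δ : Set E) |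
          Relation.ReflTransGen
            (fun x y => x ∈ (Δ : Set E) ∧ y ∈ (Δ : Set E) ∧ ⟪x, y⟫ ≠ 0) α β}
        = {x | (∃ i, x = (2 : ℝ) • e i ∨ x = -((2 : ℝ) • e i)) ∨
               (∃ i j, i ≠ j ∧ (x = e i + e j ∨ x = e i - e j ∨ x = -(e i) - e j))} ∧
      -- ordering compatible with the positive system
      (∀ i, (2 : ℝ) • e i ∈ Δpos) ∧
      (∀ i j, i < j → e i - e j ∈ Δpos) ∧
      -- α = 2e₀ is a long root and χ = e₀ is the first fundamental weight
      α = (2 : ℝ) • e 0 ∧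
      χ = e 0 := by
  classical
  have hαΔ : α ∈ Δ := hpos_sub hα
  have hg : 0 < ⟪α, α⟫ := inner_self_pos_of_mem hzero hαΔ
  have hχ : χ = (2:ℝ)⁻¹ • α := by rw [← h2χ, smul_smul]; norm_num
  have halfinj : ∀ x y : E, (2:ℝ) • x = (2:ℝ) • y → x = y := by
    intro x y h
    exact smul_right_injective E (two_ne_zero) h
  have hPα : IsHalf Δ α := by
    intro β hβ
    have hb : 0 < ⟪β, β⟫ := inner_self_pos_of_mem hzero hβ
    have hip : ⟪α, β⟫ = 2 * ⟪χ, β⟫ := by rw [← h2χ, real_inner_smul_left]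
    rcases hpos_cover β hβ with h | h
    · obtain ⟨z, _, hz⟩ := hdom β h
      exact ⟨z, by rw [hip, ← hz]⟩
    · obtain ⟨z, _, hz⟩ := hdom (-β) h
      rw [inner_neg_right, inner_neg_neg] at hz
      refine ⟨-z, ?_⟩
      push_cast
      rw [hip, ← hz]
      ring
  -- the positive long roots of the component
  set Λp : Finset E := Δpos.filter (fun γ => CLam Δ α γ) with hΛp
  have hlam_of_mem : ∀ {γ : E}, γ ∈ Λp → CLam Δ α γ := by
    intro γ h; exact (Finset.mem_filter.mp h).2
  have hpos_of_mem : ∀ {γ : E}, γ ∈ Λp → γ ∈ Δpos := by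
    intro γ h; exact (Finset.mem_filter.mp h).1
  have hαp : α ∈ Λp := Finset.mem_filter.mpr ⟨hα, hαΔ, hPα, rfl, Or.inl rfl⟩
  have hne_neg : ∀ {γ γ' : E}, γ ∈ Λp → γ' ∈ Λp → γ ≠ -γ' := by
    intro γ γ' h h' he
    exact hpos_disj γ' (hpos_of_mem h') (by rw [← he]; exact hpos_of_mem h)
  -- the order on Λp
  set S := {x // x ∈ Λp} with hS
  set r : S → S → Prop := fun x y => ∃ β ∈ Δpos, (2:ℝ) • β = (y:E) - (x:E) with hr
  have hirr : ∀ x : S, ¬ r x x := by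
    rintro x ⟨β, hβ, he⟩
    rw [sub_self] at he
    have : β = 0 := by
      apply halfinj; rw [he]; simp
    exact hzero (this ▸ hpos_sub hβ)
  have htri : ∀ x y : S, r x y ∨ x = y ∨ r y x := by
    intro x y
    by_cases hxy : x = y
    · exact Or.inr (Or.inl hxy)
    have hne : (y:E) ≠ (x:E) := fun h => hxy (Subtype.ext h.symm)
    obtain ⟨β, hβΔ, hβ⟩ := crossDiff hzero hreduced hcrys hrefl hαΔ hPα
      (hlam_of_mem y.2) (hlam_of_mem x.2) hne (hne_neg y.2 x.2)
    rcases hpos_cover β hβΔ with h | h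
    · exact Or.inl ⟨β, h, hβ⟩
    · refine Or.inr (Or.inr ⟨-β, h, ?_⟩)
      rw [smul_neg, hβ]; module
  have htrans : ∀ x y z : S, r x y → r y z → r x z := by
    rintro x y z ⟨β₁, hβ₁, he₁⟩ ⟨β₂, hβ₂, he₂⟩
    by_cases hxz : (z:E) = (x:E)
    · exfalso
      have hb : β₂ = -β₁ := by
        apply halfinj
        rw [smul_neg, he₂, he₁, hxz]
        module
      exact hpos_disj β₁ hβ₁ (hb ▸ hβ₂)
    · obtain ⟨β', hβ'Δ, hβ'⟩ := crossDiff hzero hreduced hcrys hrefl hαΔ hPα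
        (hlam_of_mem z.2) (hlam_of_mem x.2) hxz (hne_neg z.2 x.2)
      have hb : β' = β₁ + β₂ := by
        apply halfinj
        rw [hβ', smul_add, he₁, he₂]
        module
      rw [hb] at hβ'Δ
      refine ⟨β₁ + β₂, hpos_add β₁ hβ₁ β₂ hβ₂ hβ'Δ, ?_⟩
      rw [smul_add, he₁, he₂]
      module
  haveI hito : IsTrichotomous S r := ⟨fun a b h1 h2 => by rcases htri a b with h | h | h <;> tauto⟩
  haveI hitr : IsTrans S r := ⟨htrans⟩
  haveI hiir : IsIrrefl S r := ⟨hirr⟩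
  haveI histo : IsStrictTotalOrder S r := {}
  letI : LinearOrder S := linearOrderOfSTO r
  have hrlt : ∀ x y : S, x < y ↔ r x y := fun x y => Iff.rfl
  set N : ℕ := Λp.card - 1 with hN
  have hcard : Fintype.card S = N + 1 := by
    rw [Fintype.card_coe, hN]
    exact (Nat.succ_pred_eq_of_pos (Finset.card_pos.mpr ⟨α, hαp⟩)).symm
  set φ : Fin (N + 1) ≃o S := monoEquivOfFin S hcard with hφ
  set g : Fin (N + 1) → E := fun i => ((φ i.rev : S) : E) with hgdef
  set e : Fin (N + 1) → E := fun i => (2:ℝ)⁻¹ • g i with hedef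
  have h2e : ∀ i, (2 : ℝ) • e i = g i := by
    intro i
    rw [hedef]
    simp only [smul_smul]
    norm_num
  have hgmem : ∀ i, g i ∈ Λp := fun i => (φ i.rev).2
  have hgL : ∀ i, CLam Δ α (g i) := fun i => hlam_of_mem (hgmem i)
  have hgpos : ∀ i, g i ∈ Δpos := fun i => hpos_of_mem (hgmem i)
  have hginj : ∀ i j, g i = g j → i = j := by
    intro i j h
    have h1 : φ i.rev = φ j.rev := Subtype.ext h
    have h2 : i.rev = j.rev := φ.injective h1
    exact Fin.rev_injective h2
  have hgsurj : ∀ γ ∈ Λp, ∃ i, g i = γ := by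
    intro γ h
    refine ⟨(φ.symm ⟨γ, h⟩).rev, ?_⟩
    rw [hgdef]
    simp [Fin.rev_rev]
  have hgne : ∀ i j, i ≠ j → g i ≠ g j := fun i j hij h => hij (hginj i j h)
  have hgnen : ∀ i j, g i ≠ -g j := fun i j => hne_neg (hgmem i) (hgmem j)
  have horthij : ∀ i j, i ≠ j → ⟪g i, g j⟫ = 0 := by
    intro i j hij
    exact lam_orth hzero hreduced hcrys (hgL i) (hgL j)
      (hgne j i (Ne.symm hij)) (hgnen j i)
  have hlongnorm : ∀ i, ⟪g i, g i⟫ = ⟪α, α⟫ := fun i => (hgL i).2.2.1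
  have hltr : ∀ i j : Fin (N+1), i < j → r (φ j.rev) (φ i.rev) := by
    intro i j hij
    have h1 : j.rev < i.rev := Fin.rev_lt_rev.mpr hij
    exact (hrlt _ _).mp (φ.lt_iff_lt.mpr h1)
  -- α is the maximum
  have hmax : ∀ y : S, y ≤ (⟨α, hαp⟩ : S) := by
    intro y
    refine le_of_not_gt ?_
    intro hlt
    obtain ⟨β, hβpos, hβ⟩ := (hrlt _ _).mp hlt
    have hyL : CLam Δ α (y : E) := hlam_of_mem y.2
    have hyne : (y : E) ≠ α := by
      intro h
      refine hirr ⟨α, hαp⟩ ?_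
      exact (hrlt _ _).mp (by rw [← (Subtype.ext h : y = ⟨α, hαp⟩)] at hlt ⊢; exact hlt)
    have hynen : (y : E) ≠ -α := hne_neg y.2 hαp
    have horthy : ⟪α, (y : E)⟫ = 0 :=
      lam_alpha_orth hzero hreduced hcrys hαΔ hPα hyL hyne hynen
    obtain ⟨z, hz0, hz⟩ := hdom β hβpos
    have hb : 0 < ⟪β, β⟫ := inner_self_pos_of_mem hzero (hpos_sub hβpos)
    have hχβ : 2 * ⟪χ, β⟫ = 2⁻¹ * (⟪α, (y:E)⟫ - ⟪α, α⟫) := by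
      have : ⟪α, (2:ℝ) • β⟫ = ⟪α, (y:E) - α⟫ := by rw [hβ]
      rw [real_inner_smul_right, inner_sub_right] at this
      rw [hχ, real_inner_smul_left]
      linarith
    have hneg : 2 * ⟪χ, β⟫ < 0 := by
      rw [hχβ, horthy]
      nlinarith
    have hnn : (0:ℝ) ≤ 2 * ⟪χ, β⟫ / ⟪β, β⟫ := by
      rw [hz]
      exact_mod_cast hz0
    have := div_nonneg_iff.mp hnn
    rcases this with ⟨h1, _⟩ | ⟨_, h2⟩ <;> linarith
  have htop : (φ (Fin.last N) : S) = ⟨α, hαp⟩ := by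
    refine le_antisymm (hmax _) ?_
    have h1 : φ.symm ⟨α, hαp⟩ ≤ Fin.last N := Fin.le_last _
    have h2 := φ.monotone h1
    rwa [OrderIso.apply_symm_apply] at h2
  have hg0 : g 0 = α := by
    rw [hgdef]
    simp only [Fin.rev_zero]
    rw [htop]
  have he0 : e 0 = χ := by
    rw [hedef]
    simp only [hg0]
    rw [hχ]
  -- decomposition of long roots
  have hdecomp : ∀ γ : E, CLam Δ α γ → ∃ i, γ = g i ∨ γ = -g i := by
    intro γ hLγ
    rcases hpos_cover γ hLγ.1 with h | h
    · obtain ⟨i, hi⟩ := hgsurj γ (Finset.mem_filter.mpr ⟨h, hLγ⟩)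
      exact ⟨i, Or.inl hi.symm⟩
    · have hLn := lam_neg hzero hreduced hcrys hrefl hαΔ hPα hLγ
      obtain ⟨i, hi⟩ := hgsurj (-γ) (Finset.mem_filter.mpr ⟨h, hLn⟩)
      exact ⟨i, Or.inr (by rw [hi, neg_neg])⟩
  -- membership of short roots
  have hshort : ∀ γ γ' : E, CLam Δ α γ → CLam Δ α γ' → γ ≠ γ' → γ ≠ -γ' →
      ∀ x : E, (2:ℝ) • x = γ + γ' →
      x ∈ (Δ : Set E) ∧ Relation.ReflTransGen
        (fun u v => u ∈ (Δ : Set E) ∧ v ∈ (Δ : Set E) ∧ ⟪u, v⟫ ≠ 0) α x := by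
    intro γ γ' hLγ hLγ' h1 h2 x h2x
    obtain ⟨β, hβΔ, hβ⟩ := cross hzero hreduced hcrys hrefl hαΔ hPα hLγ hLγ' h1 h2
    have hxβ : x = β := halfinj _ _ (by rw [h2x, hβ])
    have hxΔ : x ∈ Δ := hxβ ▸ hβΔ
    have hipx : ⟪γ, x⟫ ≠ 0 := by
      have : ⟪γ, (2:ℝ) • x⟫ = ⟪γ, γ + γ'⟫ := by rw [h2x]
      rw [real_inner_smul_right, inner_add_right,
        lam_orth hzero hreduced hcrys hLγ hLγ' (Ne.symm h1)
          (by intro h; exact h2 (by rw [h, neg_neg]))] at this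
      have hgγ : 0 < ⟪γ, γ⟫ := inner_self_pos_of_mem hzero hLγ.1
      intro h0
      rw [h0] at this
      linarith
    refine ⟨Finset.mem_coe.mpr hxΔ, Relation.ReflTransGen.tail
      (conn hzero hreduced hcrys hrefl hαΔ hPα hLγ)
      ⟨Finset.mem_coe.mpr hLγ.1, Finset.mem_coe.mpr hxΔ, hipx⟩⟩
  refine ⟨N, e, ?_, ?_, ?_, ?_, ?_, ?_, ?_, ?_⟩
  · -- orthogonality
    intro i j hij
    rw [hedef]
    simp only [real_inner_smul_left, real_inner_smul_right, horthij i j hij]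
    ring
  · -- nonzero
    intro i h0
    have : g i = 0 := by rw [← h2e i, h0, smul_zero]
    exact hzero (this ▸ (hgL i).1)
  · -- equal norms
    have hnorm : ∀ i, ‖e i‖ = 2⁻¹ * ‖α‖ := by
      intro i
      have h1 : ‖g i‖ ^ 2 = ‖α‖ ^ 2 := by
        rw [← real_inner_self_eq_norm_sq, ← real_inner_self_eq_norm_sq]
        exact hlongnorm i
      have h2 : ‖g i‖ = ‖α‖ := by
        nlinarith [norm_nonneg (g i), norm_nonneg α]
      rw [hedef]
      simp only [norm_smul]
      rw [h2]
      norm_num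
    intro i j
    rw [hnorm i, hnorm j]
  · -- the set equality
    ext x
    simp only [Set.mem_setOf_eq, Set.mem_sep_iff]
    constructor
    · rintro ⟨hxΔ, hchain⟩
      have hQ := qp_of_chain hzero hreduced hcrys hrefl hαΔ hPα hchain
      rcases hQ with hL | ⟨γ, γ', hLγ, hLγ', hne1, hne2, h2x⟩
      · obtain ⟨i, hi | hi⟩ := hdecomp x hL
        · exact Or.inl ⟨i, Or.inl (by rw [h2e i, hi])⟩
        · exact Or.inl ⟨i, Or.inr (by rw [h2e i, hi])⟩
      · obtain ⟨i, hi⟩ := hdecomp γ hLγ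
        obtain ⟨j, hj⟩ := hdecomp γ' hLγ'
        have hij : i ≠ j := by
          intro h
          subst h
          rcases hi with hi | hi <;> rcases hj with hj | hj
          · exact hne1 (hi.trans hj.symm)
          · exact hne2 (by rw [hi, hj, neg_neg])
          · exact hne2 (by rw [hi, hj])
          · exact hne1 (by rw [hi, hj])
        have hx : x = (2:ℝ)⁻¹ • (γ + γ') := by
          rw [← h2x, smul_smul]
          norm_num
        have heγ : ∀ k, (2:ℝ)⁻¹ • g k = e k := fun k => rfl
        rcases hi with hi | hi <;> rcases hj with hj | hj
        · refine Or.inr ⟨i, j, hij, Or.inl ?_⟩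
          rw [hx, hi, hj, smul_add, heγ, heγ]
        · refine Or.inr ⟨i, j, hij, Or.inr (Or.inl ?_)⟩
          rw [hx, hi, hj, smul_add, smul_neg, heγ, heγ, sub_eq_add_neg]
        · refine Or.inr ⟨j, i, Ne.symm hij, Or.inr (Or.inl ?_)⟩
          rw [hx, hi, hj, smul_add, smul_neg, heγ, heγ]
          module
        · refine Or.inr ⟨i, j, hij, Or.inr (Or.inr ?_)⟩
          rw [hx, hi, hj, smul_add, smul_neg, smul_neg, heγ, heγ]
          module
    · rintro (⟨i, hi | hi⟩ | ⟨i, j, hij, hi⟩)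
      · rw [hi, h2e i]
        exact ⟨Finset.mem_coe.mpr (hgL i).1,
          conn hzero hreduced hcrys hrefl hαΔ hPα (hgL i)⟩
      · rw [hi, h2e i]
        have hLn := lam_neg hzero hreduced hcrys hrefl hαΔ hPα (hgL i)
        exact ⟨Finset.mem_coe.mpr hLn.1,
          conn hzero hreduced hcrys hrefl hαΔ hPα hLn⟩
      · have hLi := hgL i
        have hLj := hgL j
        have hLnj := lam_neg hzero hreduced hcrys hrefl hαΔ hPα hLj
        have hLni := lam_neg hzero hreduced hcrys hrefl hαΔ hPα hLi
        rcases hi with hi | hi | hi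
        · refine hshort (g i) (g j) hLi hLj (hgne i j hij) (hgnen i j) x ?_
          rw [hi, smul_add, h2e i, h2e j]
        · refine hshort (g i) (-g j) hLi hLnj (fun h => hgnen i j h)
            (by rw [neg_neg]; exact hgne i j hij) x ?_
          rw [hi, smul_sub, h2e i, h2e j]
          module
        · refine hshort (-g i) (-g j) hLni hLnj
            (fun h => hgne i j hij (neg_injective h))
            (by rw [neg_neg]; exact fun h => hgnen i j ((neg_eq_iff_eq_neg.mp h) ▸ rfl)) x ?_
          rw [hi, smul_sub, smul_neg, h2e i, h2e j]
          module
  · -- positivity of long roots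
    intro i
    rw [h2e i]
    exact hgpos i
  · -- ordering
    intro i j hij
    obtain ⟨β, hβpos, hβ⟩ := hltr i j hij
    have : e i - e j = β := by
      apply halfinj
      rw [smul_sub, h2e i, h2e j, hβ]
    rw [this]
    exact hβpos
  · rw [← hg0, ← h2e 0]
  · rw [he0]
end

section
/- Let α, β be positive roots in a root system such that χ = (1/2)(α + β) is a dominant integral weight and 2χ is not itself a root. Then ⟨α, β∨⟩ = ⟨β, α∨⟩ = 0, and consequently ⟨χ, α∨⟩ = 1 and ⟨χ - α, β∨⟩ = 1. -/
open scoped RealInnerProductSpace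

/-- If `α, β` are positive roots with `χ = (α+β)/2` a dominant integral weight and
`2χ = α + β` not a root, then `⟨α, β∨⟩ = ⟨β, α∨⟩ = 0` (equivalently `⟪α, β⟫ = 0`),
and consequently `⟨χ, α∨⟩ = 1` and `⟨χ − α, β∨⟩ = 1`. -/
theorem half_sum_of_roots_dominant_orthogonal
    (E : Type*) [NormedAddCommGroup E] [InnerProductSpace ℝ E] [FiniteDimensional ℝ E]
    (Δ : Finset E)
    (hzero : (0 : E) ∉ Δ)
    (hreduced : ∀ γ ∈ Δ, ∀ t : ℝ, t • γ ∈ Δ → t = 1 ∨ t = -1)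
    (hcrys : ∀ γ ∈ Δ, ∀ δ ∈ Δ, ∃ z : ℤ, 2 * ⟪γ, δ⟫ / ⟪δ, δ⟫ = (z : ℝ))
    (hrefl : ∀ γ ∈ Δ, ∀ δ ∈ Δ, γ - (2 * ⟪γ, δ⟫ / ⟪δ, δ⟫) • δ ∈ Δ)
    -- positive system
    (Δpos : Finset E)
    (hpos_sub : Δpos ⊆ Δ)
    (hpos_cover : ∀ γ ∈ Δ, γ ∈ Δpos ∨ -γ ∈ Δpos)
    (hpos_disj : ∀ γ ∈ Δpos, -γ ∉ Δpos)
    (α β : E) (hα : α ∈ Δpos) (hβ : β ∈ Δpos) (hne : α ≠ β)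
    (χ : E) (hχ : χ = (1 / 2 : ℝ) • (α + β))
    (hnotroot : α + β ∉ Δ)
    -- χ is a dominant integral weight
    (hint : ∀ γ ∈ Δ, ∃ z : ℤ, 2 * ⟪χ, γ⟫ / ⟪γ, γ⟫ = (z : ℝ))
    (hdom : ∀ γ ∈ Δpos, 0 ≤ 2 * ⟪χ, γ⟫ / ⟪γ, γ⟫) :
    2 * ⟪α, β⟫ / ⟪β, β⟫ = 0 ∧
    2 * ⟪β, α⟫ / ⟪α, α⟫ = 0 ∧
    ⟪α, β⟫ = 0 ∧
    2 * ⟪χ, α⟫ / ⟪α, α⟫ = 1 ∧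
    2 * ⟪χ - α, β⟫ / ⟪β, β⟫ = 1 := by
  have hαΔ : α ∈ Δ := hpos_sub hα
  have hβΔ : β ∈ Δ := hpos_sub hβ
  have hα0 : α ≠ 0 := fun h => hzero (h ▸ hαΔ)
  have hβ0 : β ≠ 0 := fun h => hzero (h ▸ hβΔ)
  have hA : (0 : ℝ) < ⟪α, α⟫ :=
    lt_of_le_of_ne real_inner_self_nonneg
      (fun h => hα0 (inner_self_eq_zero.1 h.symm))
  have hB : (0 : ℝ) < ⟪β, β⟫ :=
    lt_of_le_of_ne real_inner_self_nonneg
      (fun h => hβ0 (inner_self_eq_zero.1 h.symm))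
  set A := (⟪α, α⟫ : ℝ) with hAdef
  set B := (⟪β, β⟫ : ℝ) with hBdef
  set c := (⟪α, β⟫ : ℝ) with hcdef
  have hcomm : (⟪β, α⟫ : ℝ) = c := by rw [hcdef, real_inner_comm]
  have hχα : (⟪χ, α⟫ : ℝ) = (1 / 2) * (A + c) := by
    rw [hχ, real_inner_smul_left, inner_add_left, hcomm]
  have hχβ : (⟪χ, β⟫ : ℝ) = (1 / 2) * (c + B) := by
    rw [hχ, real_inner_smul_left, inner_add_left]
  have hc0 : c = 0 := by
    by_contra hc
    obtain ⟨z, hz⟩ := hint α hαΔ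
    obtain ⟨w, hw⟩ := hint β hβΔ
    have hz' : c / A = (z : ℝ) - 1 := by
      have h : 2 * ⟪χ, α⟫ / A = 1 + c / A := by
        rw [hχα]; field_simp
      rw [h] at hz; linarith
    have hw' : c / B = (w : ℝ) - 1 := by
      have h : 2 * ⟪χ, β⟫ / B = 1 + c / B := by
        rw [hχβ]; field_simp; ring
      rw [h] at hw; linarith
    have hzne : z ≠ 1 := by
      rintro rfl
      rw [Int.cast_one, sub_self, div_eq_zero_iff] at hz'
      rcases hz' with h | h
      · exact hc h
      · linarith
    have hwne : w ≠ 1 := by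
      rintro rfl
      rw [Int.cast_one, sub_self, div_eq_zero_iff] at hw'
      rcases hw' with h | h
      · exact hc h
      · linarith
    have h1 : (1 : ℝ) ≤ |c / A| := by
      rw [hz']
      have h : (1 : ℤ) ≤ |z - 1| := Int.one_le_abs (by omega)
      calc (1:ℝ) ≤ ((|z - 1| : ℤ) : ℝ) := by exact_mod_cast h
        _ = |(z : ℝ) - 1| := by push_cast; ring_nf
    have h2 : (1 : ℝ) ≤ |c / B| := by
      rw [hw']
      have h : (1 : ℤ) ≤ |w - 1| := Int.one_le_abs (by omega)
      calc (1:ℝ) ≤ ((|w - 1| : ℤ) : ℝ) := by exact_mod_cast h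
        _ = |(w : ℝ) - 1| := by push_cast; ring_nf
    have hcA : A ≤ |c| := by
      rw [abs_div, abs_of_pos hA, le_div_iff₀ hA, one_mul] at h1
      exact h1
    have hcB : B ≤ |c| := by
      rw [abs_div, abs_of_pos hB, le_div_iff₀ hB, one_mul] at h2
      exact h2
    have hcs : c * c ≤ A * B := real_inner_mul_inner_self_le α β
    have hge : A * B ≤ c * c := by
      calc A * B ≤ |c| * |c| := mul_le_mul hcA hcB (le_of_lt hB) (abs_nonneg c)
        _ = c * c := by rw [← abs_mul, abs_mul_self]
    have heq : c * c = A * B := le_antisymm hcs hge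
    have hnorm : ‖(⟪α, β⟫ : ℝ)‖ = ‖α‖ * ‖β‖ := by
      have hA' : A = ‖α‖ * ‖α‖ := real_inner_self_eq_norm_mul_norm α
      have hB' : B = ‖β‖ * ‖β‖ := real_inner_self_eq_norm_mul_norm β
      have hsq : |c| * |c| = (‖α‖ * ‖β‖) * (‖α‖ * ‖β‖) := by
        rw [← abs_mul, abs_mul_self, heq, hA', hB']; ring
      have habs : |c| = ‖α‖ * ‖β‖ :=
        (mul_self_inj_of_nonneg (abs_nonneg c) (by positivity)).1 hsq
      simpa [Real.norm_eq_abs] using habs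
    obtain ⟨r, hr0, hr⟩ := (norm_inner_eq_norm_iff hα0 hβ0).1 hnorm
    have hrΔ : r • α ∈ Δ := hr ▸ hβΔ
    rcases hreduced α hαΔ r hrΔ with h | h
    · exact hne (by rw [hr, h, one_smul])
    · refine hpos_disj α hα ?_
      have hβα : β = -α := by rw [hr, h, neg_one_smul]
      rwa [← hβα]
  refine ⟨by rw [hc0]; simp, by rw [hcomm, hc0]; simp, hc0, ?_, ?_⟩
  · rw [hχα, hc0]; field_simp; ring
  · rw [inner_sub_left, hχβ, ← hcdef, hc0]
    field_simp; ring
end
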